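/- For a finite simple graph G, the number of acyclic orientations of G equals (-1)^{|V(G)|} · π_G(-1), where π_G is the chromatic polynomial of G. -/

import Mathlib

/-- `O` is an orientation of the simple graph `G`: it orients exactly the edges of `G`,
each in exactly one direction. -/
def IsOrientation {V : Type*} (G : SimpleGraph V) (O : V → V → Prop) : Prop :=
  (∀ u v, O u v → G.Adj u v) ∧ (∀ u v, G.Adj u v → (O u v ↔ ¬ O v u))

/-- An orientation is acyclic if it admits no directed cycle. -/
def IsAcyclicRel {V : Type*} (O : V → V → Prop) : Prop :=
  ∀ v, ¬ Relation.TransGen O v v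

open Relation

namespace Stanley

variable {V : Type*}

def extRel (O : V → V → Prop) (c d : V) : V → V → Prop :=
  fun u v => O u v ∨ (u = c ∧ v = d)

lemma transGen_extRel {O : V → V → Prop} {c d x y : V}
    (h : TransGen (extRel O c d) x y) :
    TransGen O x y ∨ (ReflTransGen O x c ∧ ReflTransGen O d y) := by
  induction h with
  | single h =>
    rcases h with h | ⟨rfl, rfl⟩
    · exact Or.inl (TransGen.single h)
    · exact Or.inr ⟨ReflTransGen.refl, ReflTransGen.refl⟩
  | tail _ step ih =>
    rcases step with hs | ⟨rfl, rfl⟩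
    · rcases ih with h | ⟨h1, h2⟩
      · exact Or.inl (h.tail hs)
      · exact Or.inr ⟨h1, h2.tail hs⟩
    · rcases ih with h | ⟨h1, h2⟩
      · exact Or.inr ⟨h.to_reflTransGen, ReflTransGen.refl⟩
      · exact Or.inr ⟨h1, ReflTransGen.refl⟩

lemma isAcyclic_extRel_iff {O : V → V → Prop} {c d : V} (hO : IsAcyclicRel O)
    (hcd : c ≠ d) : IsAcyclicRel (extRel O c d) ↔ ¬ TransGen O d c := by
  constructor
  · intro h hdc
    exact h c (TransGen.head (Or.inr ⟨rfl, rfl⟩) (TransGen.mono (fun u v h => Or.inl h) _ _ hdc))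
  · intro hdc v hv
    rcases transGen_extRel hv with h | ⟨h1, h2⟩
    · exact hO v h
    · rcases reflTransGen_iff_eq_or_transGen.1 (h2.trans h1) with h | h
      · exact hcd h
      · exact hdc h

/-- The deletion of the edge `{a,b}`. -/
abbrev Del (G : SimpleGraph V) (a b : V) : SimpleGraph V where
  Adj u v := G.Adj u v ∧ ¬((u = a ∧ v = b) ∨ (u = b ∧ v = a))
  symm := by
    constructor
    intro u v ⟨h1, h2⟩
    exact ⟨h1.symm, by tauto⟩
  loopless := ⟨fun v h => G.loopless.irrefl v h.1⟩

/-- The contraction of the edge `{a,b}` (identifying `b` with `a`). -/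
abbrev Con (G : SimpleGraph V) (a b : V) : SimpleGraph {v : V // v ≠ b} where
  Adj u w := u ≠ w ∧ (G.Adj ↑u ↑w ∨ (↑u = a ∧ G.Adj b ↑w) ∨ (↑w = a ∧ G.Adj ↑u b))
  symm := by
    constructor
    intro u w ⟨h1, h2⟩
    refine ⟨h1.symm, ?_⟩
    rcases h2 with h | ⟨h3, h4⟩ | ⟨h3, h4⟩
    · exact Or.inl h.symm
    · exact Or.inr (Or.inr ⟨h3, h4.symm⟩)
    · exact Or.inr (Or.inl ⟨h3, h4.symm⟩)
  loopless := ⟨fun v h => h.1 rfl⟩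
section Edge

variable {G : SimpleGraph V} {a b : V} (hab : G.Adj a b)

def resRel (O : V → V → Prop) (a b : V) : V → V → Prop :=
  fun u v => O u v ∧ ¬((u = a ∧ v = b) ∨ (u = b ∧ v = a))

lemma not_orient_pair {O' : V → V → Prop} (h : IsOrientation (Del G a b) O') :
    ¬ O' a b ∧ ¬ O' b a := by
  constructor
  · intro hh; exact (h.1 _ _ hh).2 (Or.inl ⟨rfl, rfl⟩)
  · intro hh; exact (h.1 _ _ hh).2 (Or.inr ⟨rfl, rfl⟩)

include hab in
lemma ext_orient {O' : V → V → Prop} (hO' : IsOrientation (Del G a b) O') {c d : V}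
    (hcd : (c = a ∧ d = b) ∨ (c = b ∧ d = a)) :
    IsOrientation G (extRel O' c d) := by
  obtain ⟨h1, h2⟩ := hO'
  have hne : a ≠ b := hab.ne
  have hGcd : G.Adj c d := by
    rcases hcd with ⟨rfl, rfl⟩ | ⟨rfl, rfl⟩
    · exact hab
    · exact hab.symm
  constructor
  · rintro u v (h | ⟨rfl, rfl⟩)
    · exact (h1 _ _ h).1
    · exact hGcd
  · intro u v huv
    by_cases hp : (u = a ∧ v = b) ∨ (u = b ∧ v = a)
    · have f1 : ¬ O' u v := fun h => ((h1 _ _ h).2) hp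
      have f2 : ¬ O' v u := fun h => ((h1 _ _ h).2) (by tauto)
      rcases hcd with ⟨rfl, rfl⟩ | ⟨rfl, rfl⟩ <;>
        rcases hp with ⟨rfl, rfl⟩ | ⟨rfl, rfl⟩ <;>
        simp [extRel, f1, f2, hne, hne.symm]
    · have hD : (Del G a b).Adj u v := ⟨huv, hp⟩
      have e1 : extRel O' c d u v ↔ O' u v := by
        constructor
        · rintro (h | ⟨rfl, rfl⟩)
          · exact h
          · exact absurd hcd hp
        · exact Or.inl
      have e2 : extRel O' c d v u ↔ O' v u := by
        constructor
        · rintro (h | ⟨rfl, rfl⟩)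
          · exact h
          · exact absurd (by tauto : (u = a ∧ v = b) ∨ (u = b ∧ v = a)) hp
        · exact Or.inl
      rw [e1, e2]
      exact h2 u v hD

lemma res_orient {O : V → V → Prop} (hO : IsOrientation G O) :
    IsOrientation (Del G a b) (resRel O a b) := by
  obtain ⟨h1, h2⟩ := hO
  constructor
  · rintro u v ⟨h, hp⟩; exact ⟨h1 _ _ h, hp⟩
  · rintro u v ⟨hG, hp⟩
    have hp' : ¬((v = a ∧ u = b) ∨ (v = b ∧ u = a)) := by tauto
    constructor
    · rintro ⟨h, -⟩ ⟨h', -⟩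
      exact (h2 u v hG).1 h h'
    · intro h
      refine ⟨?_, hp⟩
      by_contra h3
      exact h ⟨(h2 v u hG.symm).2 h3, hp'⟩

lemma res_acyclic {O : V → V → Prop} (hO : IsAcyclicRel O) :
    IsAcyclicRel (resRel O a b) :=
  fun v hv => hO v (TransGen.mono (fun _ _ h => h.1) _ _ hv)

include hab in
lemma ext_res_eq {O : V → V → Prop} (hO : IsOrientation G O) {c d : V}
    (hcd : (c = a ∧ d = b) ∨ (c = b ∧ d = a)) (hcdO : O c d) :
    O = extRel (resRel O a b) c d := by
  have hne : a ≠ b := hab.ne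
  have hGcd : G.Adj c d := by
    rcases hcd with ⟨rfl, rfl⟩ | ⟨rfl, rfl⟩
    · exact hab
    · exact hab.symm
  have hnotdc : ¬ O d c := fun h => ((hO.2 c d hGcd).1 hcdO) h
  funext u v
  apply propext
  constructor
  · intro h
    by_cases hp : (u = a ∧ v = b) ∨ (u = b ∧ v = a)
    · -- (u,v) = (c,d) or (d,c); the latter is impossible
      rcases hcd with ⟨rfl, rfl⟩ | ⟨rfl, rfl⟩ <;>
        rcases hp with ⟨rfl, rfl⟩ | ⟨rfl, rfl⟩
      · exact Or.inr ⟨rfl, rfl⟩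
      · exact absurd h hnotdc
      · exact absurd h hnotdc
      · exact Or.inr ⟨rfl, rfl⟩
    · exact Or.inl ⟨h, hp⟩
  · rintro (⟨h, -⟩ | ⟨rfl, rfl⟩)
    · exact h
    · exact hcdO

lemma res_ext_eq {O' : V → V → Prop} (hO' : IsOrientation (Del G a b) O') {c d : V}
    (hcd : (c = a ∧ d = b) ∨ (c = b ∧ d = a)) :
    resRel (extRel O' c d) a b = O' := by
  funext u v
  apply propext
  constructor
  · rintro ⟨h | ⟨rfl, rfl⟩, hp⟩
    · exact h
    · exact absurd hcd hp
  · intro h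
    exact ⟨Or.inl h, (hO'.1 _ _ h).2⟩

end Edge
section Edge2

variable {G : SimpleGraph V} {a b : V}

/-- acyclic orientations of `G` -/
abbrev AO (G : SimpleGraph V) := {O : V → V → Prop // IsOrientation G O ∧ IsAcyclicRel O}

/-- acyclic orientations of `Del G a b` with no directed path between `a` and `b` -/
abbrev BO (G : SimpleGraph V) (a b : V) :=
  {O : V → V → Prop // IsOrientation (Del G a b) O ∧ IsAcyclicRel O ∧
    ¬ TransGen O a b ∧ ¬ TransGen O b a}

lemma eq_of_ext_eq {O₁ O₂ : V → V → Prop} (h₁ : IsOrientation (Del G a b) O₁)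
    (h₂ : IsOrientation (Del G a b) O₂) {c d : V}
    (hcd : (c = a ∧ d = b) ∨ (c = b ∧ d = a))
    (h : extRel O₁ c d = extRel O₂ c d) : O₁ = O₂ := by
  rw [← res_ext_eq h₁ hcd, h, res_ext_eq h₂ hcd]

lemma ext_cross_ne (hne : a ≠ b) {O₁ O₂ : V → V → Prop}
    (h₂ : IsOrientation (Del G a b) O₂) :
    extRel O₁ a b ≠ extRel O₂ b a := by
  intro h
  have h1 : extRel O₁ a b a b := Or.inr ⟨rfl, rfl⟩
  rw [h] at h1
  rcases h1 with h1 | ⟨h1, -⟩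
  · exact (not_orient_pair h₂).1 h1
  · exact hne h1

open Classical in
noncomputable def Phi (hab : G.Adj a b) : (AO (Del G a b) ⊕ BO G a b) → AO G
  | .inl ⟨O', h⟩ =>
    if hA : IsAcyclicRel (extRel O' a b)
    then ⟨extRel O' a b, ext_orient hab h.1 (Or.inl ⟨rfl, rfl⟩), hA⟩
    else ⟨extRel O' b a, ext_orient hab h.1 (Or.inr ⟨rfl, rfl⟩), by
      have h1 : TransGen O' b a := by
        by_contra hh
        exact hA ((isAcyclic_extRel_iff h.2 hab.ne).2 hh)
      have h2 : ¬ TransGen O' a b := fun hh => h.2 a (hh.trans h1)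
      exact (isAcyclic_extRel_iff h.2 hab.ne.symm).2 h2⟩
  | .inr ⟨O', h⟩ => ⟨extRel O' b a, ext_orient hab h.1 (Or.inr ⟨rfl, rfl⟩),
      (isAcyclic_extRel_iff h.2.1 hab.ne.symm).2 h.2.2.1⟩

lemma phi_bijective (hab : G.Adj a b) : Function.Bijective (Phi hab) := by
  constructor
  · rintro (⟨O₁, hD₁, hA₁⟩ | ⟨O₁, h₁⟩) (⟨O₂, hD₂, hA₂⟩ | ⟨O₂, h₂⟩) heq <;>
      simp only [Phi] at heq
    · split_ifs at heq with c1 c2 c2 <;>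
        rw [Subtype.mk_eq_mk] at heq
      · rw [Sum.inl.injEq, Subtype.mk_eq_mk]
        exact eq_of_ext_eq hD₁ hD₂ (Or.inl ⟨rfl, rfl⟩) heq
      · exact absurd heq (ext_cross_ne hab.ne hD₂)
      · exact absurd heq.symm (ext_cross_ne hab.ne hD₁)
      · rw [Sum.inl.injEq, Subtype.mk_eq_mk]
        exact eq_of_ext_eq hD₁ hD₂ (Or.inr ⟨rfl, rfl⟩) heq
    · split_ifs at heq with c1 <;> rw [Subtype.mk_eq_mk] at heq
      · exact absurd heq (ext_cross_ne hab.ne h₂.1)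
      · -- both are b→a extensions, so O₁ = O₂, but then O₂ ∈ B gives acyclicity of ext a b
        have hO : O₁ = O₂ := eq_of_ext_eq hD₁ h₂.1 (Or.inr ⟨rfl, rfl⟩) heq
        subst hO
        exact absurd ((isAcyclic_extRel_iff h₂.2.1 hab.ne).2 h₂.2.2.2) c1
    · split_ifs at heq with c1 <;> rw [Subtype.mk_eq_mk] at heq
      · exact absurd heq.symm (ext_cross_ne hab.ne h₁.1)
      · have hO : O₂ = O₁ := eq_of_ext_eq hD₂ h₁.1 (Or.inr ⟨rfl, rfl⟩) heq.symm
        subst hO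
        exact absurd ((isAcyclic_extRel_iff h₁.2.1 hab.ne).2 h₁.2.2.2) c1
    · rw [Subtype.mk_eq_mk] at heq
      rw [Sum.inr.injEq, Subtype.mk_eq_mk]
      exact eq_of_ext_eq h₁.1 h₂.1 (Or.inr ⟨rfl, rfl⟩) heq
  · rintro ⟨O, hO, hA⟩
    have hres : IsOrientation (Del G a b) (resRel O a b) := res_orient hO
    have hresA : IsAcyclicRel (resRel O a b) := res_acyclic hA
    by_cases hoab : O a b
    · have hOeq : O = extRel (resRel O a b) a b :=
        ext_res_eq hab hO (Or.inl ⟨rfl, rfl⟩) hoab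
      refine ⟨.inl ⟨resRel O a b, hres, hresA⟩, ?_⟩
      have hA' : IsAcyclicRel (extRel (resRel O a b) a b) := hOeq ▸ hA
      simp only [Phi]
      rw [dif_pos hA']
      exact Subtype.ext hOeq.symm
    · have hoba : O b a := by
        by_contra h
        exact hoab ((hO.2 a b hab).2 h)
      have hOeq : O = extRel (resRel O a b) b a :=
        ext_res_eq hab hO (Or.inr ⟨rfl, rfl⟩) hoba
      have hAba : IsAcyclicRel (extRel (resRel O a b) b a) := hOeq ▸ hA
      have hnab : ¬ TransGen (resRel O a b) a b :=
        (isAcyclic_extRel_iff hresA hab.ne.symm).1 hAba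
      by_cases hA' : IsAcyclicRel (extRel (resRel O a b) a b)
      · have hnba : ¬ TransGen (resRel O a b) b a :=
          (isAcyclic_extRel_iff hresA hab.ne).1 hA'
        refine ⟨.inr ⟨resRel O a b, hres, hresA, hnab, hnba⟩, ?_⟩
        simp only [Phi]
        exact Subtype.ext hOeq.symm
      · refine ⟨.inl ⟨resRel O a b, hres, hresA⟩, ?_⟩
        simp only [Phi]
        rw [dif_neg hA']
        exact Subtype.ext hOeq.symm

lemma card_AO [Finite V] (hab : G.Adj a b) :
    Nat.card (AO G) = Nat.card (AO (Del G a b)) + Nat.card (BO G a b) := by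
  rw [← Nat.card_congr (Equiv.ofBijective _ (phi_bijective hab)),
    Nat.card_sum]

end Edge2
section Contraction

variable {G : SimpleGraph V} {a b : V}

open Classical in
noncomputable def liftV (a : V) {b : V} (hne : a ≠ b) : V → {v : V // v ≠ b} :=
  fun v => if h : v = b then ⟨a, hne⟩ else ⟨v, h⟩

lemma liftV_of_ne {a : V} {hne : a ≠ b} {v : V} (h : v ≠ b) : liftV a hne v = ⟨v, h⟩ := by
  simp [liftV, h]

lemma liftV_b {a : V} {hne : a ≠ b} : liftV a hne b = ⟨a, hne⟩ := by
  simp [liftV]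

lemma liftV_coe {a : V} {hne : a ≠ b} (u : {v : V // v ≠ b}) : liftV a hne ↑u = u := by
  rw [liftV_of_ne u.2]

lemma orient_total {H : SimpleGraph V} {O : V → V → Prop} (hO : IsOrientation H O)
    {x y : V} (h : H.Adj x y) : O x y ∨ O y x := by
  by_cases hx : O x y
  · exact Or.inl hx
  · exact Or.inr ((hO.2 y x h.symm).2 hx)

lemma adj_liftV {hne : a ≠ b} {x y : V} (h : (Del G a b).Adj x y) :
    (Con G a b).Adj (liftV a hne x) (liftV a hne y) := by
  obtain ⟨hG, hp⟩ := h
  by_cases hx : x = b <;> by_cases hy : y = b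
  · subst hx; subst hy; exact absurd hG (G.loopless.irrefl _)
  · subst hx
    rw [liftV_b, liftV_of_ne hy]
    have hya : y ≠ a := fun h => hp (Or.inr ⟨rfl, h⟩)
    exact ⟨fun h => hya (congrArg Subtype.val h).symm, Or.inr (Or.inl ⟨rfl, hG⟩)⟩
  · subst hy
    rw [liftV_b, liftV_of_ne hx]
    have hxa : x ≠ a := fun h => hp (Or.inl ⟨h, rfl⟩)
    exact ⟨fun h => hxa (congrArg Subtype.val h), Or.inr (Or.inr ⟨rfl, hG⟩)⟩
  · rw [liftV_of_ne hx, liftV_of_ne hy]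
    exact ⟨fun h => hG.ne (congrArg Subtype.val h), Or.inl hG⟩

def FRel (O' : V → V → Prop) (a b : V) : {v : V // v ≠ b} → {v : V // v ≠ b} → Prop :=
  fun u w => O' ↑u ↑w ∨ (↑u = a ∧ O' b ↑w) ∨ (↑w = a ∧ O' ↑u b)

def GRel (G : SimpleGraph V) (a : V) {b : V} (hne : a ≠ b)
    (Ob : {v : V // v ≠ b} → {v : V // v ≠ b} → Prop) : V → V → Prop :=
  fun x y => (Del G a b).Adj x y ∧ Ob (liftV a hne x) (liftV a hne y)

variable {O' : V → V → Prop}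

lemma F_not_both (hD : IsOrientation (Del G a b) O') (hac : IsAcyclicRel O')
    (hnab : ¬ TransGen O' a b) (hnba : ¬ TransGen O' b a)
    {u w : {v : V // v ≠ b}} (hne2 : u ≠ w)
    (h1 : FRel O' a b u w) (h2 : FRel O' a b w u) : False := by
  rcases h1 with p1 | ⟨hu, p2⟩ | ⟨hw, p3⟩ <;>
    rcases h2 with q1 | ⟨hw', q2⟩ | ⟨hu', q3⟩
  · exact hac _ ((TransGen.single p1).tail q1)
  · exact hnba (by rw [← hw']; exact (TransGen.single q2).tail p1)
  · exact hnab (by rw [← hu']; exact (TransGen.single p1).tail q3)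
  · exact hnba (by rw [← hu]; exact (TransGen.single p2).tail q1)
  · exact hne2 (Subtype.ext (hu.trans hw'.symm))
  · exact hac _ ((TransGen.single p2).tail q3)
  · exact hnab (by rw [← hw]; exact (TransGen.single q1).tail p3)
  · exact hac _ ((TransGen.single p3).tail q2)
  · exact hne2 (Subtype.ext (hu'.trans hw.symm))

lemma F_orient (hD : IsOrientation (Del G a b) O') (hac : IsAcyclicRel O')
    (hnab : ¬ TransGen O' a b) (hnba : ¬ TransGen O' b a) (hne : a ≠ b) :
    IsOrientation (Con G a b) (FRel O' a b) := by
  constructor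
  · rintro u w (p1 | ⟨hu, p2⟩ | ⟨hw, p3⟩)
    · have hD1 := hD.1 _ _ p1
      exact ⟨fun h => hD1.1.ne (congrArg Subtype.val h), Or.inl hD1.1⟩
    · refine ⟨?_, Or.inr (Or.inl ⟨hu, (hD.1 _ _ p2).1⟩)⟩
      intro h
      subst h
      exact (not_orient_pair hD).2 (hu ▸ p2)
    · refine ⟨?_, Or.inr (Or.inr ⟨hw, (hD.1 _ _ p3).1⟩)⟩
      intro h
      subst h
      exact (not_orient_pair hD).1 (hw ▸ p3)
  · rintro u w ⟨hne2, hadj⟩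
    have htot : FRel O' a b u w ∨ FRel O' a b w u := by
      rcases hadj with h | ⟨hu, h⟩ | ⟨hw, h⟩
      · have hDadj : (Del G a b).Adj ↑u ↑w :=
          ⟨h, by rintro (⟨-, h2⟩ | ⟨h2, -⟩); exacts [w.2 h2, u.2 h2]⟩
        rcases orient_total hD hDadj with h' | h'
        · exact Or.inl (Or.inl h')
        · exact Or.inr (Or.inl h')
      · have hDadj : (Del G a b).Adj b ↑w := by
          refine ⟨h, ?_⟩
          rintro (⟨h2, -⟩ | ⟨-, h2⟩)
          · exact hne h2.symm
          · exact hne2 (Subtype.ext (hu.trans h2.symm))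
        rcases orient_total hD hDadj with h' | h'
        · exact Or.inl (Or.inr (Or.inl ⟨hu, h'⟩))
        · exact Or.inr (Or.inr (Or.inr ⟨hu, h'⟩))
      · have hDadj : (Del G a b).Adj ↑u b := by
          refine ⟨h, ?_⟩
          rintro (⟨h2, -⟩ | ⟨h2, -⟩)
          · exact hne2 (Subtype.ext (h2.trans hw.symm))
          · exact u.2 h2
        rcases orient_total hD hDadj with h' | h'
        · exact Or.inl (Or.inr (Or.inr ⟨hw, h'⟩))
        · exact Or.inr (Or.inr (Or.inl ⟨hw, h'⟩))
    constructor
    · intro h h'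
      exact F_not_both hD hac hnab hnba hne2 h h'
    · intro h
      rcases htot with h' | h'
      · exact h'
      · exact absurd h' h

lemma F_trans (hD : IsOrientation (Del G a b) O') (hac : IsAcyclicRel O')
    (hnab : ¬ TransGen O' a b) (hnba : ¬ TransGen O' b a) (hne : a ≠ b)
    {u w : {v : V // v ≠ b}} (h : TransGen (FRel O' a b) u w) :
    TransGen O' ↑u ↑w ∨ (ReflTransGen O' ↑u a ∧ ReflTransGen O' b ↑w) ∨
      (ReflTransGen O' ↑u b ∧ ReflTransGen O' a ↑w) := by
  induction h with
  | single h =>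
    rcases h with p1 | ⟨hu, p2⟩ | ⟨hw, p3⟩
    · exact Or.inl (TransGen.single p1)
    · exact Or.inr (Or.inl ⟨by rw [hu], ReflTransGen.single p2⟩)
    · exact Or.inr (Or.inr ⟨ReflTransGen.single p3, by rw [hw]⟩)
  | tail _ step ih =>
    rename_i w' z' _
    rcases step with e1 | ⟨hw, e2⟩ | ⟨hz, e3⟩
    · rcases ih with s1 | ⟨s2a, s2b⟩ | ⟨s3a, s3b⟩
      · exact Or.inl (s1.tail e1)
      · exact Or.inr (Or.inl ⟨s2a, s2b.tail e1⟩)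
      · exact Or.inr (Or.inr ⟨s3a, s3b.tail e1⟩)
    · rcases ih with s1 | ⟨s2a, s2b⟩ | ⟨s3a, s3b⟩
      · exact Or.inr (Or.inl ⟨by rw [← hw]; exact s1.to_reflTransGen,
          ReflTransGen.single e2⟩)
      · rw [hw] at s2b
        rcases reflTransGen_iff_eq_or_transGen.1 s2b with h' | h'
        · exact absurd h' hne
        · exact absurd h' hnba
      · rcases reflTransGen_iff_eq_or_transGen.1 s3a with h' | h'
        · exact Or.inl (TransGen.single (h' ▸ e2))
        · exact Or.inl (h'.tail e2)
    · rcases ih with s1 | ⟨s2a, s2b⟩ | ⟨s3a, s3b⟩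
      · exact Or.inr (Or.inr ⟨s1.to_reflTransGen.tail e3, by rw [hz]⟩)
      · exact absurd (TransGen.tail' s2b e3) (hac b)
      · exact absurd (TransGen.tail' s3b e3) hnab

lemma F_acyclic (hD : IsOrientation (Del G a b) O') (hac : IsAcyclicRel O')
    (hnab : ¬ TransGen O' a b) (hnba : ¬ TransGen O' b a) (hne : a ≠ b) :
    IsAcyclicRel (FRel O' a b) := by
  intro v hv
  rcases F_trans hD hac hnab hnba hne hv with s1 | ⟨s2a, s2b⟩ | ⟨s3a, s3b⟩
  · exact hac _ s1
  · rcases reflTransGen_iff_eq_or_transGen.1 (s2b.trans s2a) with h' | h'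
    · exact hne h'
    · exact hnba h'
  · rcases reflTransGen_iff_eq_or_transGen.1 (s3b.trans s3a) with h' | h'
    · exact hne h'.symm
    · exact hnab h'


lemma G_orient {Ob : {v : V // v ≠ b} → {v : V // v ≠ b} → Prop} (hne : a ≠ b)
    (hOb : IsOrientation (Con G a b) Ob) :
    IsOrientation (Del G a b) (GRel G a hne Ob) := by
  constructor
  · rintro x y ⟨h, -⟩
    exact h
  · intro x y h
    have hc := adj_liftV (hne := hne) h
    constructor
    · rintro ⟨-, h1⟩ ⟨-, h2⟩
      exact (hOb.2 _ _ hc).1 h1 h2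
    · intro h1
      refine ⟨h, ?_⟩
      by_contra h2
      exact h1 ⟨h.symm, (hOb.2 _ _ hc.symm).2 h2⟩

lemma G_transGen {Ob : {v : V // v ≠ b} → {v : V // v ≠ b} → Prop} {hne : a ≠ b}
    {x y : V} (h : TransGen (GRel G a hne Ob) x y) :
    TransGen Ob (liftV a hne x) (liftV a hne y) :=
  TransGen.lift (r := GRel G a hne Ob) (liftV a hne) (fun x y (h : GRel G a hne Ob x y) => h.2) _ _ h

lemma G_acyclic {Ob : {v : V // v ≠ b} → {v : V // v ≠ b} → Prop} (hne : a ≠ b)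
    (hOb : IsAcyclicRel Ob) : IsAcyclicRel (GRel G a hne Ob) :=
  fun v hv => hOb _ (G_transGen hv)

lemma G_noPath {Ob : {v : V // v ≠ b} → {v : V // v ≠ b} → Prop} (hne : a ≠ b)
    (hOb : IsAcyclicRel Ob) :
    ¬ TransGen (GRel G a hne Ob) a b ∧ ¬ TransGen (GRel G a hne Ob) b a := by
  constructor
  · intro h
    have h2 := G_transGen h
    rw [liftV_of_ne hne, liftV_b] at h2
    exact hOb _ h2
  · intro h
    have h2 := G_transGen h
    rw [liftV_of_ne hne, liftV_b] at h2
    exact hOb _ h2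

lemma GF_eq (hD : IsOrientation (Del G a b) O') (hac : IsAcyclicRel O')
    (hnab : ¬ TransGen O' a b) (hnba : ¬ TransGen O' b a) (hne : a ≠ b) :
    GRel G a hne (FRel O' a b) = O' := by
  funext x y
  apply propext
  constructor
  · rintro ⟨hadj, hF⟩
    by_cases hx : x = b <;> by_cases hy : y = b
    · exfalso; rw [hx, hy] at hadj; exact hadj.ne rfl
    · rw [hx] at hadj hF ⊢
      rw [liftV_b, liftV_of_ne hy] at hF
      rcases hF with d1 | ⟨-, d2⟩ | ⟨d3, d4⟩
      · rcases orient_total hD hadj with h' | h'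
        · exact h'
        · exact absurd ((TransGen.single d1).tail h') hnab
      · exact d2
      · exact absurd d4 (not_orient_pair hD).1
    · rw [hy] at hadj hF ⊢
      rw [liftV_b, liftV_of_ne hx] at hF
      rcases hF with d1 | ⟨d2, d3⟩ | ⟨-, d4⟩
      · rcases orient_total hD hadj with h' | h'
        · exact h'
        · exact absurd ((TransGen.single h').tail d1) hnba
      · exact absurd d3 (not_orient_pair hD).2
      · exact d4
    · rw [liftV_of_ne hx, liftV_of_ne hy] at hF
      rcases hF with d1 | ⟨d2, d3⟩ | ⟨d2, d3⟩
      · exact d1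
      · have d2' : x = a := d2
        have d3' : O' b y := d3
        rw [d2'] at hadj ⊢
        rcases orient_total hD hadj with h' | h'
        · exact h'
        · exact absurd ((TransGen.single d3').tail h') hnba
      · have d2' : y = a := d2
        have d3' : O' x b := d3
        rw [d2'] at hadj ⊢
        rcases orient_total hD hadj with h' | h'
        · exact h'
        · exact absurd ((TransGen.single h').tail d3') hnab
  · intro h
    have hadj := hD.1 _ _ h
    refine ⟨hadj, ?_⟩
    by_cases hx : x = b <;> by_cases hy : y = b
    · exfalso; rw [hx, hy] at hadj; exact hadj.ne rfl
    · rw [hx] at h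
      rw [hx, liftV_b, liftV_of_ne hy]
      exact Or.inr (Or.inl ⟨rfl, h⟩)
    · rw [hy] at h
      rw [hy, liftV_b, liftV_of_ne hx]
      exact Or.inr (Or.inr ⟨rfl, h⟩)
    · rw [liftV_of_ne hx, liftV_of_ne hy]
      exact Or.inl h

lemma FG_eq {Ob : {v : V // v ≠ b} → {v : V // v ≠ b} → Prop} (hne : a ≠ b)
    (hOb : IsOrientation (Con G a b) Ob) :
    FRel (GRel G a hne Ob) a b = Ob := by
  funext u w
  apply propext
  constructor
  · rintro (⟨-, d1⟩ | ⟨hu, -, d2⟩ | ⟨hw, -, d3⟩)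
    · rwa [liftV_coe, liftV_coe] at d1
    · rw [liftV_b, liftV_coe] at d2
      have : (⟨a, hne⟩ : {v : V // v ≠ b}) = u := Subtype.ext hu.symm
      rwa [this] at d2
    · rw [liftV_b, liftV_coe] at d3
      have : (⟨a, hne⟩ : {v : V // v ≠ b}) = w := Subtype.ext hw.symm
      rwa [this] at d3
  · intro h
    obtain ⟨hne2, hadj⟩ := hOb.1 _ _ h
    rcases hadj with h1 | ⟨hu, h1⟩ | ⟨hw, h1⟩
    · refine Or.inl ⟨⟨h1, ?_⟩, ?_⟩
      · rintro (⟨-, h2⟩ | ⟨h2, -⟩)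
        · exact w.2 h2
        · exact u.2 h2
      · rwa [liftV_coe, liftV_coe]
    · refine Or.inr (Or.inl ⟨hu, ⟨h1, ?_⟩, ?_⟩)
      · rintro (⟨h2, -⟩ | ⟨-, h2⟩)
        · exact hne h2.symm
        · exact hne2 (Subtype.ext (hu.trans h2.symm))
      · rw [liftV_b, liftV_coe]
        have : (⟨a, hne⟩ : {v : V // v ≠ b}) = u := Subtype.ext hu.symm
        rwa [this]
    · refine Or.inr (Or.inr ⟨hw, ⟨h1, ?_⟩, ?_⟩)
      · rintro (⟨h2, -⟩ | ⟨h2, -⟩)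
        · exact hne2 (Subtype.ext (h2.trans hw.symm))
        · exact u.2 h2
      · rw [liftV_b, liftV_coe]
        have : (⟨a, hne⟩ : {v : V // v ≠ b}) = w := Subtype.ext hw.symm
        rwa [this]

lemma card_BO (hab : G.Adj a b) :
    Nat.card (BO G a b) = Nat.card (AO (Con G a b)) := by
  have hne : a ≠ b := hab.ne
  refine Nat.card_congr ⟨fun x => ⟨FRel x.1 a b, F_orient x.2.1 x.2.2.1 x.2.2.2.1 x.2.2.2.2 hne,
      F_acyclic x.2.1 x.2.2.1 x.2.2.2.1 x.2.2.2.2 hne⟩,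
    fun y => ⟨GRel G a hne y.1, G_orient hne y.2.1, G_acyclic hne y.2.2,
      (G_noPath hne y.2.2).1, (G_noPath hne y.2.2).2⟩, ?_, ?_⟩
  · rintro ⟨O', h⟩
    exact Subtype.ext (GF_eq h.1 h.2.1 h.2.2.1 h.2.2.2 hne)
  · rintro ⟨Ob, h⟩
    exact Subtype.ext (FG_eq hne h.1)


lemma card_color [Finite V] (hab : G.Adj a b) (c : ℕ) :
    Nat.card {f : V → Fin c // ∀ u v, (Del G a b).Adj u v → f u ≠ f v} =
    Nat.card {f : V → Fin c // ∀ u v, G.Adj u v → f u ≠ f v} +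
    Nat.card {g : {v : V // v ≠ b} → Fin c // ∀ u w, (Con G a b).Adj u w → g u ≠ g w} := by
  have hne : a ≠ b := hab.ne
  rw [← Nat.card_sum]
  apply Nat.card_congr
  exact {
    toFun := fun x =>
      if h : x.1 a = x.1 b then
        Sum.inr ⟨fun u => x.1 ↑u, by
          rintro u w ⟨hne2, hadj⟩
          rcases hadj with h1 | ⟨hu, h1⟩ | ⟨hw, h1⟩
          · refine x.2 ↑u ↑w ⟨h1, ?_⟩
            rintro (⟨-, h2⟩ | ⟨h2, -⟩)
            · exact w.2 h2
            · exact u.2 h2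
          · have hD : (Del G a b).Adj b ↑w := by
              refine ⟨h1, ?_⟩
              rintro (⟨h2, -⟩ | ⟨-, h2⟩)
              · exact hne h2.symm
              · exact hne2 (Subtype.ext (hu.trans h2.symm))
            have e1 : x.1 ↑u = x.1 b := by rw [hu, h]
            intro e
            exact x.2 b ↑w hD (e1.symm.trans e)
          · have hD : (Del G a b).Adj ↑u b := by
              refine ⟨h1, ?_⟩
              rintro (⟨h2, -⟩ | ⟨h2, -⟩)
              · exact hne2 (Subtype.ext (h2.trans hw.symm))
              · exact u.2 h2
            have e1 : x.1 ↑w = x.1 b := by rw [hw, h]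
            intro e
            exact x.2 ↑u b hD (e.trans e1)⟩
      else
        Sum.inl ⟨x.1, by
          intro u v huv
          by_cases hp : (u = a ∧ v = b) ∨ (u = b ∧ v = a)
          · rcases hp with ⟨rfl, rfl⟩ | ⟨rfl, rfl⟩
            · exact h
            · exact fun e => h e.symm
          · exact x.2 u v ⟨huv, hp⟩⟩,
    invFun := fun s => Sum.elim
      (fun f => ⟨f.1, fun u v h => f.2 u v h.1⟩)
      (fun g => ⟨fun v => g.1 (liftV a hne v), by
        intro x y hxy
        exact g.2 _ _ (adj_liftV hxy)⟩) s,
    left_inv := by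
      rintro ⟨f, hf⟩
      dsimp only
      split_ifs with h
      · dsimp only [Sum.elim]
        apply Subtype.ext
        funext v
        show f ↑(liftV a hne v) = f v
        by_cases hv : v = b
        · rw [hv, liftV_b]
          show f a = f b
          exact h
        · rw [liftV_of_ne hv]
      · rfl,
    right_inv := by
      rintro (⟨f, hf⟩ | ⟨g, hg⟩) <;> dsimp only [Sum.elim]
      · rw [dif_neg (hf a b hab)]
      · have he : (fun v => g (liftV a hne v)) a = (fun v => g (liftV a hne v)) b := by
          dsimp only
          rw [liftV_of_ne hne, liftV_b]
        rw [dif_pos he]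
        refine congrArg _ (Subtype.ext ?_)
        funext u
        dsimp only
        rw [liftV_coe] }


lemma con_adj_cases {u w : {v : V // v ≠ b}} (h : (Con G a b).Adj u w)
    (hG : ¬ G.Adj ↑u ↑w) :
    (↑u = a ∧ G.Adj b ↑w ∧ (↑w : V) ≠ a) ∨ ((↑u : V) ≠ a ∧ ↑w = a ∧ G.Adj ↑u b) := by
  obtain ⟨hne2, hadj⟩ := h
  rcases hadj with h1 | ⟨hu, h1⟩ | ⟨hw, h1⟩
  · exact absurd h1 hG
  · have hwa : (↑w : V) ≠ a := fun h2 => hne2 (Subtype.ext (hu.trans h2.symm))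
    exact Or.inl ⟨hu, h1, hwa⟩
  · have hua : (↑u : V) ≠ a := fun h2 => hne2 (Subtype.ext (h2.trans hw.symm))
    exact Or.inr ⟨hua, hw, h1⟩

lemma card_pairs_del_lt [Finite V] (hab : G.Adj a b) :
    Nat.card {p : V × V // (Del G a b).Adj p.1 p.2} <
      Nat.card {p : V × V // G.Adj p.1 p.2} := by
  have h1 : {p : V × V | (Del G a b).Adj p.1 p.2} ⊂ {p : V × V | G.Adj p.1 p.2} := by
    constructor
    · rintro p hp
      exact hp.1
    · intro hsub
      have h2 : G.Adj (a, b).1 (a, b).2 := hab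
      have h3 := hsub h2
      exact h3.2 (Or.inl ⟨rfl, rfl⟩)
  have h4 := Set.ncard_lt_ncard h1 (Set.toFinite _)
  rw [← Nat.card_coe_set_eq, ← Nat.card_coe_set_eq] at h4
  exact h4

open Classical in
lemma card_pairs_con_le [Finite V] (hab : G.Adj a b) :
    Nat.card {p : {v : V // v ≠ b} × {v : V // v ≠ b} // (Con G a b).Adj p.1 p.2} ≤
      Nat.card {p : V × V // (Del G a b).Adj p.1 p.2} := by
  have hne : a ≠ b := hab.ne
  refine Nat.card_le_card_of_injective (fun q =>
    if h : G.Adj ↑q.1.1 ↑q.1.2 then ⟨((q.1.1 : V), (q.1.2 : V)), h, by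
      rintro (⟨-, h2⟩ | ⟨h2, -⟩)
      · exact q.1.2.2 h2
      · exact q.1.1.2 h2⟩
    else if h2 : (q.1.1 : V) = a then ⟨(b, (q.1.2 : V)), by
      rcases con_adj_cases q.2 h with ⟨-, h3, h4⟩ | ⟨h3, -, -⟩
      · refine ⟨h3, ?_⟩
        rintro (⟨h5, -⟩ | ⟨-, h5⟩)
        · exact hne h5.symm
        · exact h4 h5
      · exact absurd h2 h3⟩
    else ⟨((q.1.1 : V), b), by
      rcases con_adj_cases q.2 h with ⟨h3, -, -⟩ | ⟨-, -, h3⟩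
      · exact absurd h3 h2
      · refine ⟨h3, ?_⟩
        rintro (⟨h5, -⟩ | ⟨h5, -⟩)
        · exact h2 h5
        · exact q.1.1.2 h5⟩) ?_
  rintro ⟨⟨u1, w1⟩, hq1⟩ ⟨⟨u2, w2⟩, hq2⟩ heq
  dsimp only at heq
  have goal_eq : ∀ (h : u1 = u2) (h' : w1 = w2),
      (⟨(u1, w1), hq1⟩ : {p : {v : V // v ≠ b} × {v : V // v ≠ b} //
        (Con G a b).Adj p.1 p.2}) = ⟨(u2, w2), hq2⟩ := by
    intro h h'
    subst h
    subst h'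
    rfl
  by_cases hA1 : G.Adj (u1 : V) ↑w1 <;> by_cases hB1 : G.Adj (u2 : V) ↑w2
  · rw [dif_pos hA1, dif_pos hB1, Subtype.mk_eq_mk, Prod.mk.injEq] at heq
    exact goal_eq (Subtype.ext heq.1) (Subtype.ext heq.2)
  · rw [dif_pos hA1, dif_neg hB1] at heq
    by_cases hB2 : (u2 : V) = a
    · rw [dif_pos hB2, Subtype.mk_eq_mk, Prod.mk.injEq] at heq
      exact absurd heq.1 u1.2
    · rw [dif_neg hB2, Subtype.mk_eq_mk, Prod.mk.injEq] at heq
      exact absurd heq.2 w1.2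
  · rw [dif_neg hA1, dif_pos hB1] at heq
    by_cases hA2 : (u1 : V) = a
    · rw [dif_pos hA2, Subtype.mk_eq_mk, Prod.mk.injEq] at heq
      exact absurd heq.1.symm u2.2
    · rw [dif_neg hA2, Subtype.mk_eq_mk, Prod.mk.injEq] at heq
      exact absurd heq.2.symm w2.2
  · rw [dif_neg hA1, dif_neg hB1] at heq
    by_cases hA2 : (u1 : V) = a <;> by_cases hB2 : (u2 : V) = a
    · rw [dif_pos hA2, dif_pos hB2, Subtype.mk_eq_mk, Prod.mk.injEq] at heq
      exact goal_eq (Subtype.ext (hA2.trans hB2.symm)) (Subtype.ext heq.2)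
    · rw [dif_pos hA2, dif_neg hB2, Subtype.mk_eq_mk, Prod.mk.injEq] at heq
      exact absurd heq.1.symm u2.2
    · rw [dif_neg hA2, dif_pos hB2, Subtype.mk_eq_mk, Prod.mk.injEq] at heq
      exact absurd heq.1 u1.2
    · rw [dif_neg hA2, dif_neg hB2, Subtype.mk_eq_mk, Prod.mk.injEq] at heq
      refine goal_eq (Subtype.ext heq.1) (Subtype.ext ?_)
      rcases con_adj_cases hq1 hA1 with ⟨h3, -, -⟩ | ⟨-, h3, -⟩
      · exact absurd h3 hA2
      · rcases con_adj_cases hq2 hB1 with ⟨h4, -, -⟩ | ⟨-, h4, -⟩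
        · exact absurd h4 hB2
        · exact h3.trans h4.symm

end Contraction


section Main

variable {G : SimpleGraph V}

lemma poly_ext {P Q : Polynomial ℚ} (h : ∀ n : ℕ, P.eval (n : ℚ) = Q.eval (n : ℚ)) :
    P = Q := by
  have h0 : P - Q = 0 := by
    apply Polynomial.eq_zero_of_infinite_isRoot
    apply Set.infinite_of_injective_forall_mem (f := fun n : ℕ => (n : ℚ)) Nat.cast_injective
    intro n
    simp only [Set.mem_setOf_eq, Polynomial.IsRoot, Polynomial.eval_sub, h n, sub_self]
  exact sub_eq_zero.mp h0

lemma noedge_orient_card (hE : ∀ u v : V, ¬ G.Adj u v) :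
    Nat.card {O : V → V → Prop // IsOrientation G O ∧ IsAcyclicRel O} = 1 := by
  haveI : Unique {O : V → V → Prop // IsOrientation G O ∧ IsAcyclicRel O} := {
    default := ⟨fun _ _ => False, ⟨fun u v h => h.elim, fun u v h => absurd h (hE u v)⟩,
      fun v hv => by
        cases hv with
        | single h => exact h
        | tail _ h => exact h⟩,
    uniq := by
      rintro ⟨O, hO, -⟩
      apply Subtype.ext
      funext u v
      apply propext
      exact ⟨fun h => hE u v (hO.1 u v h), False.elim⟩ }
  exact Nat.card_unique

lemma noedge_color_card [Finite V] (hE : ∀ u v : V, ¬ G.Adj u v) (c : ℕ) :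
    Nat.card {f : V → Fin c // ∀ u v, G.Adj u v → f u ≠ f v} = c ^ (Nat.card V) := by
  rw [Nat.card_congr (Equiv.subtypeUnivEquiv (fun f u v h => absurd h (hE u v)))]
  rw [Nat.card_fun, Nat.card_eq_fintype_card (α := Fin c), Fintype.card_fin]

lemma card_subtype_ne [Finite V] (b : V) :
    Nat.card V = Nat.card {v : V // v ≠ b} + 1 := by
  classical
  rw [← Nat.card_congr (Equiv.optionSubtypeNe b),
    Nat.card_congr (Equiv.optionEquivSumPUnit.{0} _), Nat.card_sum]
  simp

end Main

universe u

lemma key1 : ∀ (k : ℕ) (V : Type u) [Fintype V] (G : SimpleGraph V),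
    Nat.card {p : V × V // G.Adj p.1 p.2} ≤ k →
    ∃ P : Polynomial ℚ, ∀ c : ℕ,
      P.eval (c : ℚ) = Nat.card {f : V → Fin c // ∀ u v, G.Adj u v → f u ≠ f v} := by
  intro k
  induction k with
  | zero =>
    intro V _ G hk
    have hE : ∀ u v, ¬ G.Adj u v := by
      intro u v h
      haveI : Nonempty {p : V × V // G.Adj p.1 p.2} := ⟨⟨(u, v), h⟩⟩
      have := Nat.card_pos (α := {p : V × V // G.Adj p.1 p.2})
      omega
    refine ⟨Polynomial.X ^ (Nat.card V), fun c => ?_⟩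
    rw [noedge_color_card hE c]
    push_cast [Polynomial.eval_pow, Polynomial.eval_X]
    ring
  | succ k ih =>
    intro V _ G hk
    by_cases hE : ∀ u v, ¬ G.Adj u v
    · refine ⟨Polynomial.X ^ (Nat.card V), fun c => ?_⟩
      rw [noedge_color_card hE c]
      push_cast [Polynomial.eval_pow, Polynomial.eval_X]
      ring
    · push_neg at hE
      obtain ⟨a, b, hab⟩ := hE
      have h1 := card_pairs_del_lt hab
      have h2 := card_pairs_con_le hab
      haveI : Fintype {v : V // v ≠ b} := Fintype.ofFinite _
      obtain ⟨PD, hPD⟩ := ih V (Del G a b) (by omega)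
      obtain ⟨PC, hPC⟩ := ih {v : V // v ≠ b} (Con G a b) (by omega)
      refine ⟨PD - PC, fun c => ?_⟩
      have h3 := card_color hab c
      rw [Polynomial.eval_sub, hPD c, hPC c]
      have h3q : (Nat.card {f : V → Fin c // ∀ u v, (Del G a b).Adj u v → f u ≠ f v} : ℚ) =
          (Nat.card {f : V → Fin c // ∀ u v, G.Adj u v → f u ≠ f v} : ℚ) +
          (Nat.card {g : {v : V // v ≠ b} → Fin c //
            ∀ u w, (Con G a b).Adj u w → g u ≠ g w} : ℚ) := by
        rw [h3]
        push_cast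
        ring
      linarith [h3q]

lemma key2 : ∀ (k : ℕ) (V : Type u) [Fintype V] (G : SimpleGraph V),
    Nat.card {p : V × V // G.Adj p.1 p.2} ≤ k →
    ∀ P : Polynomial ℚ,
    (∀ c : ℕ, P.eval (c : ℚ) =
      Nat.card {f : V → Fin c // ∀ u v, G.Adj u v → f u ≠ f v}) →
    (Nat.card {O : V → V → Prop // IsOrientation G O ∧ IsAcyclicRel O} : ℚ) =
      (-1) ^ (Nat.card V) * P.eval (-1) := by
  intro k
  induction k with
  | zero =>
    intro V _ G hk P hP
    have hE : ∀ u v, ¬ G.Adj u v := by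
      intro u v h
      haveI : Nonempty {p : V × V // G.Adj p.1 p.2} := ⟨⟨(u, v), h⟩⟩
      have := Nat.card_pos (α := {p : V × V // G.Adj p.1 p.2})
      omega
    have hPeq : P = Polynomial.X ^ (Nat.card V) := by
      apply poly_ext
      intro n
      rw [hP n, noedge_color_card hE n]
      push_cast [Polynomial.eval_pow, Polynomial.eval_X]
      ring
    rw [noedge_orient_card hE, hPeq]
    rw [Polynomial.eval_pow, Polynomial.eval_X, ← mul_pow]
    norm_num
  | succ k ih =>
    intro V _ G hk P hP
    by_cases hE : ∀ u v, ¬ G.Adj u v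
    · have hPeq : P = Polynomial.X ^ (Nat.card V) := by
        apply poly_ext
        intro n
        rw [hP n, noedge_color_card hE n]
        push_cast [Polynomial.eval_pow, Polynomial.eval_X]
        ring
      rw [noedge_orient_card hE, hPeq]
      rw [Polynomial.eval_pow, Polynomial.eval_X, ← mul_pow]
      norm_num
    · push_neg at hE
      obtain ⟨a, b, hab⟩ := hE
      have h1 := card_pairs_del_lt hab
      have h2 := card_pairs_con_le hab
      haveI : Fintype {v : V // v ≠ b} := Fintype.ofFinite _
      obtain ⟨PD, hPD⟩ := key1 (Nat.card {p : V × V // (Del G a b).Adj p.1 p.2})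
        V (Del G a b) le_rfl
      obtain ⟨PC, hPC⟩ := key1 (Nat.card {p : {v : V // v ≠ b} × {v : V // v ≠ b} //
        (Con G a b).Adj p.1 p.2}) {v : V // v ≠ b} (Con G a b) le_rfl
      have hD := ih V (Del G a b) (by omega) PD hPD
      have hC := ih {v : V // v ≠ b} (Con G a b) (by omega) PC hPC
      have hPsplit : P = PD - PC := by
        apply poly_ext
        intro n
        rw [hP n, Polynomial.eval_sub, hPD n, hPC n]
        have h3 := card_color hab n
        have h3q : (Nat.card {f : V → Fin n // ∀ u v, (Del G a b).Adj u v → f u ≠ f v} : ℚ) =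
            (Nat.card {f : V → Fin n // ∀ u v, G.Adj u v → f u ≠ f v} : ℚ) +
            (Nat.card {g : {v : V // v ≠ b} → Fin n //
              ∀ u w, (Con G a b).Adj u w → g u ≠ g w} : ℚ) := by
          rw [h3]
          push_cast
          ring
        linarith [h3q]
      have hcard := card_AO hab
      have hBO := card_BO hab
      have hn : Nat.card V = Nat.card {v : V // v ≠ b} + 1 := card_subtype_ne b
      have hsum : (Nat.card {O : V → V → Prop // IsOrientation G O ∧ IsAcyclicRel O} : ℚ) =
          (Nat.card {O : V → V → Prop //
            IsOrientation (Del G a b) O ∧ IsAcyclicRel O} : ℚ) +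
          (Nat.card {O : {v : V // v ≠ b} → {v : V // v ≠ b} → Prop //
            IsOrientation (Con G a b) O ∧ IsAcyclicRel O} : ℚ) := by
        rw [hcard, hBO]
        push_cast
        ring
      rw [hsum, hD, hC, hPsplit, Polynomial.eval_sub, hn]
      ring

theorem stmt5' {V : Type u} [Fintype V] (G : SimpleGraph V)
    (P : Polynomial ℚ)
    (hP : ∀ c : ℕ, P.eval (c : ℚ) =
      Nat.card {f : V → Fin c // ∀ u v, G.Adj u v → f u ≠ f v}) :
    (Nat.card {O : V → V → Prop // IsOrientation G O ∧ IsAcyclicRel O} : ℚ) =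
      (-1) ^ (Fintype.card V) * P.eval (-1) := by
  have h := key2 (Nat.card {p : V × V // G.Adj p.1 p.2}) V G le_rfl P hP
  rw [show Fintype.card V = Nat.card V from (Nat.card_eq_fintype_card).symm]
  exact h

end Stanley

/-- The number of acyclic orientations of a finite simple graph `G` equals
`(-1)^{|V|} · π_G(-1)`, where `π_G` is the chromatic polynomial of `G` (characterized by
its values at natural numbers). -/
theorem stmt5 {V : Type*} [Fintype V] (G : SimpleGraph V)
    (P : Polynomial ℚ)
    (hP : ∀ c : ℕ, P.eval (c : ℚ) =
      Nat.card {f : V → Fin c // ∀ u v, G.Adj u v → f u ≠ f v}) :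
    (Nat.card {O : V → V → Prop // IsOrientation G O ∧ IsAcyclicRel O} : ℚ) =
      (-1) ^ (Fintype.card V) * P.eval (-1) :=
  Stanley.stmt5' G P hP
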